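/- Let Q be a nonempty dense linear order without endpoints and let D ⊆ Q^n be a nonempty definable set. Then D admits a finite partition into pairwise disjoint definable sets, each of which is in definable bijection with a canonical related set: a set of the form {x ∈ Q^N : x_1 > x_2 > ⋯ > x_N, and x_{s_j} > a_j whenever s_j ≥ 1 and a_j > x_{s_j + 1} whenever s_j < N, for each 1 ≤ j ≤ k}, for some N ≥ 0, some k ≥ 0, some strictly decreasing parameters a_1 > a_2 > ⋯ > a_k in Q, and some weakly increasing positions 0 ≤ s_1 ≤ s_2 ≤ ⋯ ≤ s_k ≤ N (with N = 0 giving the one-point set Q^0, so singleton pieces are allowed). -/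

import Mathlib

open FirstOrder FirstOrder.Language

attribute [local instance] FirstOrder.Language.orderStructure

/-- A subset of `Q^n` is definable if it is defined by a first-order formula in the
language of orders with finitely many parameters from `Q`. -/
def DLODefinable {Q : Type*} [LinearOrder Q] {n : ℕ} (s : Set (Fin n → Q)) : Prop :=
  ∃ A : Set Q, A.Finite ∧ A.Definable Language.order s

/-- The graph of `f` restricted to `D₁`, as a subset of `Q^(n+m)`. -/
def graphOn {Q : Type*} {n m : ℕ} (D₁ : Set (Fin n → Q))
    (f : (Fin n → Q) → (Fin m → Q)) : Set (Fin (n + m) → Q) :=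
  {z | ∃ x ∈ D₁, z = Fin.append x (f x)}

/-- A definable bijection from `D₁ ⊆ Q^n` onto `D₂ ⊆ Q^m`: a bijection from `D₁` onto `D₂`
whose graph is a definable subset of `Q^(n+m)`. -/
def DefBij {Q : Type*} [LinearOrder Q] {n m : ℕ} (D₁ : Set (Fin n → Q))
    (D₂ : Set (Fin m → Q)) : Prop :=
  ∃ f : (Fin n → Q) → (Fin m → Q), Set.BijOn f D₁ D₂ ∧ DLODefinable (graphOn D₁ f)

/-- The canonical related set determined by dimension `N`, a strictly decreasing parameter
tuple `a : Fin k → Q` and weakly increasing positions `s : Fin k → ℕ` with `s j ≤ N`: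
the set `{x ∈ Q^N | x 0 > x 1 > ⋯ > x (N-1)}` with `x (s j - 1) > a j` whenever `1 ≤ s j`
and `a j > x (s j)` whenever `s j < N`. -/
def canonicalRelated {Q : Type*} [LinearOrder Q] (N k : ℕ) (a : Fin k → Q) (s : Fin k → ℕ)
    (hsN : ∀ j, s j ≤ N) : Set (Fin N → Q) :=
  {x | StrictAnti x ∧ ∀ j : Fin k,
    (∀ h : 1 ≤ s j, a j < x ⟨s j - 1, by have := hsN j; omega⟩) ∧
    (∀ h : s j < N, x ⟨s j, h⟩ < a j)}

section Helpers

variable {Q : Type*} [LinearOrder Q]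

instance ordStr : Language.order.OrderedStructure Q := ⟨fun _ => Iff.rfl⟩

lemma order_term_eq_var {γ : Type*} (t : Language.order.Term γ) : ∃ p, t = Language.Term.var p := by
  cases t with
  | var p => exact ⟨p, rfl⟩
  | func f ts => exact isEmptyElim f

lemma dlod_basic {m : ℕ} {s : Set (Fin m → Q)} {A : Set Q} (hA : A.Finite)
    (φ : Language.order.Formula (↥A ⊕ Fin m))
    (h : s = {v | φ.Realize (Sum.elim (↑) v)}) : DLODefinable s :=
  ⟨A, hA, Set.definable_iff_exists_formula_sum.2 ⟨φ, h⟩⟩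

lemma dlod_le_le {m : ℕ} (i j : Fin m) : DLODefinable {x : Fin m → Q | x i ≤ x j} := by
  refine dlod_basic (Set.finite_empty (α := Q))
    (Language.Term.le (Language.Term.var (Sum.inl (Sum.inr i)))
      (Language.Term.var (Sum.inl (Sum.inr j)))) ?_
  ext v
  simp [Formula.Realize]

lemma dlod_le_const {m : ℕ} (i : Fin m) (t : Q) : DLODefinable {x : Fin m → Q | x i ≤ t} := by
  refine dlod_basic (Set.finite_singleton t)
    (Language.Term.le (Language.Term.var (Sum.inl (Sum.inr i)))
      (Language.Term.var (Sum.inl (Sum.inl ⟨t, rfl⟩)))) ?_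
  ext v
  simp [Formula.Realize]

lemma dlod_const_le {m : ℕ} (i : Fin m) (t : Q) : DLODefinable {x : Fin m → Q | t ≤ x i} := by
  refine dlod_basic (Set.finite_singleton t)
    (Language.Term.le (Language.Term.var (Sum.inl (Sum.inl ⟨t, rfl⟩)))
      (Language.Term.var (Sum.inl (Sum.inr i)))) ?_
  ext v
  simp [Formula.Realize]

lemma DLODefinable.compl {m : ℕ} {s : Set (Fin m → Q)} (h : DLODefinable s) :
    DLODefinable sᶜ := by
  obtain ⟨A, hA, hd⟩ := h
  exact ⟨A, hA, hd.compl⟩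

lemma DLODefinable.inter {m : ℕ} {s t : Set (Fin m → Q)} (hs : DLODefinable s)
    (ht : DLODefinable t) : DLODefinable (s ∩ t) := by
  obtain ⟨A, hA, hd⟩ := hs
  obtain ⟨B, hB, he⟩ := ht
  exact ⟨A ∪ B, hA.union hB, (hd.mono Set.subset_union_left).inter
    (he.mono Set.subset_union_right)⟩

lemma dlod_univ {m : ℕ} : DLODefinable (Set.univ : Set (Fin m → Q)) :=
  ⟨∅, Set.finite_empty, Set.definable_univ⟩

lemma dlod_empty {m : ℕ} : DLODefinable (∅ : Set (Fin m → Q)) :=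
  ⟨∅, Set.finite_empty, Set.definable_empty⟩

lemma DLODefinable.iInter {m : ℕ} {ι : Type*} [Fintype ι] {f : ι → Set (Fin m → Q)}
    (h : ∀ i, DLODefinable (f i)) : DLODefinable (⋂ i, f i) := by
  choose A hfin hdef using h
  refine ⟨⋃ i, A i, Set.finite_iUnion hfin, ?_⟩
  have : (⋂ i, f i) = ⋂ i ∈ Finset.univ, f i := by simp
  rw [this]
  exact Set.definable_biInter_finset
    (fun i => (hdef i).mono (Set.subset_iUnion A i)) _

lemma dlod_eq {m : ℕ} (i j : Fin m) : DLODefinable {x : Fin m → Q | x i = x j} := by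
  have : {x : Fin m → Q | x i = x j} =
      {x : Fin m → Q | x i ≤ x j} ∩ {x : Fin m → Q | x j ≤ x i} := by
    ext x; simp [le_antisymm_iff]
  rw [this]
  exact (dlod_le_le i j).inter (dlod_le_le j i)

lemma DLODefinable.preimage_comp {m M : ℕ} {s : Set (Fin m → Q)} (h : DLODefinable s)
    (g : Fin m → Fin M) : DLODefinable {z : Fin M → Q | (fun i => z (g i)) ∈ s} := by
  obtain ⟨A, hA, hd⟩ := h
  exact ⟨A, hA, hd.preimage_comp g⟩

lemma realize_equal_var {β : Type*} {m : ℕ} (p q : β ⊕ Fin m) (u : β → Q) (zs : Fin m → Q) :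
    (BoundedFormula.equal (L := Language.order) (Term.var p) (Term.var q)).Realize u zs ↔
      Sum.elim u zs p = Sum.elim u zs q := by
  rw [show (BoundedFormula.equal (Term.var p) (Term.var q) : Language.order.BoundedFormula β m) =
    Term.bdEqual (Term.var p) (Term.var q) from rfl, BoundedFormula.realize_bdEqual]
  simp

lemma realize_rel_le {β : Type*} {m : ℕ} (ts : Fin 2 → Language.order.Term (β ⊕ Fin m))
    (p q : β ⊕ Fin m) (hp : ts 0 = Term.var p) (hq : ts 1 = Term.var q)
    (u : β → Q) (zs : Fin m → Q) :
    (BoundedFormula.rel Language.orderRel.le ts).Realize u zs ↔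
      Sum.elim u zs p ≤ Sum.elim u zs q := by
  have h0 : (BoundedFormula.rel Language.orderRel.le ts).Realize u zs ↔
      Structure.RelMap (M := Q) (Language.leSymb : Language.order.Relations 2)
        (fun i => (ts i).realize (Sum.elim u zs)) := Iff.rfl
  rw [h0, Language.relMap_leSymb]
  simp only [hp, hq, Term.realize_var]

end Helpers

section Invariance

variable {Q : Type*} [LinearOrder Q] [DenselyOrdered Q] [NoMinOrder Q] [NoMaxOrder Q] [Nonempty Q]

lemma exists_extension {β : Type*} [Finite β] (V W : β → Q)
    (H : ∀ p q, V p ≤ V q ↔ W p ≤ W q) (b : Q) :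
    ∃ c, ∀ p, (V p ≤ b ↔ W p ≤ c) ∧ (b ≤ V p ↔ c ≤ W p) := by
  classical
  have Hlt : ∀ p q, V p < V q ↔ W p < W q := by
    intro p q
    rw [lt_iff_not_ge, lt_iff_not_ge, H q p]
  by_cases hb : ∃ p, V p = b
  · obtain ⟨p₀, hp₀⟩ := hb
    refine ⟨W p₀, fun p => ⟨?_, ?_⟩⟩
    · rw [← hp₀, H]
    · rw [← hp₀, H]
  · push_neg at hb
    haveI : Fintype β := Fintype.ofFinite β
    set L : Finset β := Finset.univ.filter (fun p => V p < b) with hL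
    set U : Finset β := Finset.univ.filter (fun p => b < V p) with hU
    have hmemL : ∀ p, p ∈ L ↔ V p < b := by intro p; simp [hL]
    have hmemU : ∀ p, p ∈ U ↔ b < V p := by intro p; simp [hU]
    have hLU : ∀ p, p ∈ L ∨ p ∈ U := by
      intro p
      rcases lt_trichotomy (V p) b with h | h | h
      · exact Or.inl ((hmemL p).2 h)
      · exact absurd h (hb p)
      · exact Or.inr ((hmemU p).2 h)
    have key : ∃ c, (∀ p ∈ L, W p < c) ∧ (∀ p ∈ U, c < W p) := by
      by_cases hLn : L.Nonempty
      · obtain ⟨p₀, hp₀L, hmax⟩ := Finset.exists_max_image L V hLn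
        by_cases hUn : U.Nonempty
        · obtain ⟨p₁, hp₁U, hmin⟩ := Finset.exists_min_image U V hUn
          have h01 : W p₀ < W p₁ :=
            (Hlt p₀ p₁).1 (lt_trans ((hmemL p₀).1 hp₀L) ((hmemU p₁).1 hp₁U))
          obtain ⟨c, hc₁, hc₂⟩ := exists_between h01
          refine ⟨c, fun p hp => lt_of_le_of_lt ((H p p₀).1 (hmax p hp)) hc₁,
            fun p hp => lt_of_lt_of_le hc₂ ((H p₁ p).1 (hmin p hp))⟩
        · obtain ⟨c, hc⟩ := exists_gt (W p₀)
          refine ⟨c, fun p hp => lt_of_le_of_lt ((H p p₀).1 (hmax p hp)) hc,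
            fun p hp => absurd ⟨p, hp⟩ hUn⟩
      · by_cases hUn : U.Nonempty
        · obtain ⟨p₁, hp₁U, hmin⟩ := Finset.exists_min_image U V hUn
          obtain ⟨c, hc⟩ := exists_lt (W p₁)
          exact ⟨c, fun p hp => absurd ⟨p, hp⟩ hLn,
            fun p hp => lt_of_lt_of_le hc ((H p₁ p).1 (hmin p hp))⟩
        · exact ⟨Classical.arbitrary Q, fun p hp => absurd ⟨p, hp⟩ hLn,
            fun p hp => absurd ⟨p, hp⟩ hUn⟩
    obtain ⟨c, hcL, hcU⟩ := key
    refine ⟨c, fun p => ?_⟩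
    rcases hLU p with hp | hp
    · have h1 : V p < b := (hmemL p).1 hp
      have h2 : W p < c := hcL p hp
      exact ⟨⟨fun _ => le_of_lt h2, fun _ => le_of_lt h1⟩,
        ⟨fun h => absurd h (not_le.2 h1), fun h => absurd h (not_le.2 h2)⟩⟩
    · have h1 : b < V p := (hmemU p).1 hp
      have h2 : c < W p := hcU p hp
      exact ⟨⟨fun h => absurd h (not_le.2 h1), fun h => absurd h (not_le.2 h2)⟩,
        ⟨fun _ => le_of_lt h2, fun _ => le_of_lt h1⟩⟩

omit [DenselyOrdered Q] [NoMinOrder Q] [NoMaxOrder Q] [Nonempty Q] in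
lemma extend_H {β : Type*} {m : ℕ} (v w : β → Q) (xs ys : Fin m → Q) (b c : Q)
    (H : ∀ p q : β ⊕ Fin m, Sum.elim v xs p ≤ Sum.elim v xs q ↔
      Sum.elim w ys p ≤ Sum.elim w ys q)
    (hbc : ∀ p : β ⊕ Fin m, (Sum.elim v xs p ≤ b ↔ Sum.elim w ys p ≤ c) ∧
      (b ≤ Sum.elim v xs p ↔ c ≤ Sum.elim w ys p)) :
    ∀ p q : β ⊕ Fin (m + 1),
      Sum.elim v (Fin.snoc xs b) p ≤ Sum.elim v (Fin.snoc xs b) q ↔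
      Sum.elim w (Fin.snoc ys c) p ≤ Sum.elim w (Fin.snoc ys c) q := by
  have hval : ∀ p : β ⊕ Fin (m + 1),
      (∃ p', Sum.elim v (Fin.snoc xs b) p = Sum.elim v xs p' ∧
        Sum.elim w (Fin.snoc ys c) p = Sum.elim w ys p') ∨
      (Sum.elim v (Fin.snoc xs b) p = b ∧ Sum.elim w (Fin.snoc ys c) p = c) := by
    rintro (p | i)
    · exact Or.inl ⟨Sum.inl p, rfl, rfl⟩
    · refine Fin.lastCases ?_ ?_ i
      · exact Or.inr ⟨by simp, by simp⟩
      · intro i; exact Or.inl ⟨Sum.inr i, by simp, by simp⟩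
  intro p q
  rcases hval p with ⟨p', hp1, hp2⟩ | ⟨hp1, hp2⟩ <;>
    rcases hval q with ⟨q', hq1, hq2⟩ | ⟨hq1, hq2⟩ <;> rw [hp1, hp2, hq1, hq2]
  · exact H p' q'
  · exact (hbc p').1
  · exact (hbc q').2
  · simp

lemma realize_invariant {β : Type*} [Finite β] {m : ℕ}
    (φ : Language.order.BoundedFormula β m) :
    ∀ (v w : β → Q) (xs ys : Fin m → Q),
      (∀ p q : β ⊕ Fin m, Sum.elim v xs p ≤ Sum.elim v xs q ↔
        Sum.elim w ys p ≤ Sum.elim w ys q) →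
      (φ.Realize v xs ↔ φ.Realize w ys) := by
  induction φ with
  | falsum => intro v w xs ys H; exact Iff.rfl
  | equal t₁ t₂ =>
    intro v w xs ys H
    obtain ⟨p, rfl⟩ := order_term_eq_var t₁
    obtain ⟨q, rfl⟩ := order_term_eq_var t₂
    rw [realize_equal_var p q v xs, realize_equal_var p q w ys,
      le_antisymm_iff, le_antisymm_iff, H p q, H q p]
  | rel R ts =>
    intro v w xs ys H
    cases R with
    | le =>
      obtain ⟨p, hp⟩ := order_term_eq_var (ts 0)
      obtain ⟨q, hq⟩ := order_term_eq_var (ts 1)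
      rw [realize_rel_le ts p q hp hq v xs, realize_rel_le ts p q hp hq w ys]
      exact H p q
  | imp f g ihf ihg =>
    intro v w xs ys H
    simp only [BoundedFormula.realize_imp]
    rw [ihf v w xs ys H, ihg v w xs ys H]
  | all f ih =>
    intro v w xs ys H
    simp only [BoundedFormula.realize_all]
    constructor
    · intro h c
      obtain ⟨b, hbc⟩ := exists_extension (Sum.elim w ys) (Sum.elim v xs)
        (fun p q => (H p q).symm) c
      exact (ih v w (Fin.snoc xs b) (Fin.snoc ys c)
        (extend_H v w xs ys b c H (fun p => ⟨(hbc p).1.symm, (hbc p).2.symm⟩))).1 (h b)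
    · intro h b
      obtain ⟨c, hbc⟩ := exists_extension (Sum.elim v xs) (Sum.elim w ys) H b
      exact (ih v w (Fin.snoc xs b) (Fin.snoc ys c) (extend_H v w xs ys b c H hbc)).2 (h c)

end Invariance

section Rank

variable {Q : Type*} [LinearOrder Q]

lemma rank_lemma {N : ℕ} (rep : Fin N → Q) (hrep : StrictAnti rep) (t : Q) (r : Fin N) :
    t < rep r ↔ (r : ℕ) < (Finset.univ.filter (fun r' => t < rep r')).card := by
  classical
  constructor
  · intro h
    have hsub : Finset.Iic r ⊆ Finset.univ.filter (fun r' => t < rep r') := by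
      intro r' hr'
      simp only [Finset.mem_filter, Finset.mem_univ, true_and]
      exact lt_of_lt_of_le h (hrep.antitone (Finset.mem_Iic.1 hr'))
    calc (r : ℕ) < (r : ℕ) + 1 := Nat.lt_succ_self _
      _ = (Finset.Iic r).card := (Fin.card_Iic r).symm
      _ ≤ _ := Finset.card_le_card hsub
  · intro h
    by_contra hc
    push_neg at hc
    have hsub : Finset.univ.filter (fun r' => t < rep r') ⊆ Finset.Iio r := by
      intro r' hr'
      simp only [Finset.mem_filter, Finset.mem_univ, true_and] at hr'
      rw [Finset.mem_Iio]
      exact hrep.lt_iff_gt.1 (lt_of_le_of_lt hc hr')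
    have := Finset.card_le_card hsub
    rw [Fin.card_Iio] at this
    omega

end Rank

/-- Every nonempty definable subset of `Q^n` admits a finite partition into pairwise
disjoint definable sets, each in definable bijection with a canonical related set. -/
theorem dlo_partition_into_related {Q : Type*} [LinearOrder Q] [DenselyOrdered Q]
    [NoMinOrder Q] [NoMaxOrder Q] [Nonempty Q] {n : ℕ} (D : Set (Fin n → Q))
    (hD : DLODefinable D) (hne : D.Nonempty) :
    ∃ (p : ℕ) (parts : Fin p → Set (Fin n → Q)),
      (∀ i j, i ≠ j → Disjoint (parts i) (parts j)) ∧
      (⋃ i, parts i) = D ∧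
      ∀ i, DLODefinable (parts i) ∧
        ∃ (N k : ℕ) (a : Fin k → Q) (s : Fin k → ℕ) (hsN : ∀ j, s j ≤ N),
          StrictAnti a ∧ Monotone s ∧ DefBij (parts i) (canonicalRelated N k a s hsN) := by
  classical
  obtain ⟨A, hAfin, hAdef⟩ := hD
  rw [Set.definable_iff_exists_formula_sum] at hAdef
  obtain ⟨φ, hφ⟩ := hAdef
  haveI : Finite ↥A := hAfin.to_subtype
  set K := hAfin.toFinset.card with hK
  set aiso := hAfin.toFinset.orderIsoOfFin hK.symm with haiso
  set a : Fin K → Q := fun j => ↑(aiso j.rev) with ha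
  have ha_anti : StrictAnti a := by
    intro j j' hjj'
    exact Subtype.coe_lt_coe.2 (aiso.strictMono (Fin.rev_lt_rev.2 hjj'))
  have ha_mem : ∀ j, a j ∈ A := fun j => hAfin.mem_toFinset.1 (aiso j.rev).2
  have ha_cover : ∀ q ∈ A, ∃ j, a j = q := by
    intro q hq
    refine ⟨(aiso.symm ⟨q, hAfin.mem_toFinset.2 hq⟩).rev, ?_⟩
    rw [ha]
    simp
  -- the combined tuple and order type
  set c : (Fin n → Q) → (Fin n ⊕ Fin K) → Q := fun x => Sum.elim x a with hc
  set ot : (Fin n → Q) → Finset ((Fin n ⊕ Fin K) × (Fin n ⊕ Fin K)) :=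
    fun x => Finset.univ.filter (fun pq => c x pq.1 ≤ c x pq.2) with hot
  have ot_iff : ∀ x y, ot x = ot y ↔ ∀ p q, (c x p ≤ c x q ↔ c y p ≤ c y q) := by
    intro x y
    constructor
    · intro h p q
      have := Finset.ext_iff.1 h (p, q)
      simpa [hot] using this
    · intro h
      ext ⟨p, q⟩
      simpa [hot] using h p q
  -- invariance
  have key : ∀ x y, ot x = ot y → (x ∈ D ↔ y ∈ D) := by
    intro x y hxy
    rw [hφ]
    simp only [Set.mem_setOf_eq]
    set ι : ↥A ⊕ Fin n → Fin n ⊕ Fin K :=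
      Sum.elim (fun q : ↥A => Sum.inr (ha_cover (↑q) q.2).choose) Sum.inl with hι
    have hval : ∀ (z : Fin n → Q) (p : ↥A ⊕ Fin n),
        Sum.elim (↑) z p = c z (ι p) := by
      rintro z (q | i)
      · exact ((ha_cover (↑q) q.2).choose_spec).symm
      · rfl
    refine realize_invariant φ _ _ default default ?_
    rintro (p | p) (q | q)
    · simp only [Sum.elim_inl]
      rw [hval x p, hval x q, hval y p, hval y q]
      exact (ot_iff x y).1 hxy (ι p) (ι q)
    · exact q.elim0
    · exact p.elim0
    · exact p.elim0
  -- parts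
  set T : Finset (Finset ((Fin n ⊕ Fin K) × (Fin n ⊕ Fin K))) :=
    Finset.univ.filter (fun τ => ∃ x ∈ D, ot x = τ) with hT
  refine ⟨T.card, fun i => {x | ot x = ↑(T.equivFin.symm i)}, ?_, ?_, ?_⟩
  · intro i j hij
    rw [Set.disjoint_left]
    intro x hxi hxj
    exact hij (T.equivFin.symm.injective (Subtype.ext ((hxi.symm.trans hxj : _))))
  · ext x
    simp only [Set.mem_iUnion, Set.mem_setOf_eq]
    constructor
    · rintro ⟨i, hi⟩
      obtain ⟨x₀, hx₀D, hx₀⟩ := (Finset.mem_filter.1 (T.equivFin.symm i).2).2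
      exact (key x x₀ (hi.trans hx₀.symm)).2 hx₀D
    · intro hx
      have hτ : ot x ∈ T := Finset.mem_filter.2 ⟨Finset.mem_univ _, ⟨x, hx, rfl⟩⟩
      exact ⟨T.equivFin ⟨ot x, hτ⟩, by rw [Equiv.symm_apply_apply]⟩
  · intro i
    obtain ⟨x₀, hx₀D, hx₀⟩ := (Finset.mem_filter.1 (T.equivFin.symm i).2).2
    have hPeq : {x | ot x = ↑(T.equivFin.symm i)} = {x | ot x = ot x₀} := by rw [hx₀]
    rw [show ((fun i => {x | ot x = ↑(T.equivFin.symm i)}) i) = {x | ot x = ot x₀} from hPeq]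
    -- data from x₀
    set F : Finset Q := (Finset.univ.image x₀) \ hAfin.toFinset with hF
    set N := F.card with hN
    set riso := F.orderIsoOfFin hN.symm with hriso
    set rep : Fin N → Q := fun r => ↑(riso r.rev) with hrep
    have hrep_anti : StrictAnti rep := by
      intro r r' hrr'
      exact Subtype.coe_lt_coe.2 (riso.strictMono (Fin.rev_lt_rev.2 hrr'))
    have hrep_F : ∀ r, rep r ∈ F := fun r => (riso r.rev).2
    have hrep_cover : ∀ q ∈ F, ∃ r, rep r = q := by
      intro q hq
      refine ⟨(riso.symm ⟨q, hq⟩).rev, ?_⟩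
      rw [hrep]
      simp
    have hrep_notA : ∀ r, rep r ∉ A := by
      intro r hr
      exact (Finset.mem_sdiff.1 (hrep_F r)).2 (hAfin.mem_toFinset.2 hr)
    have hrep_image : ∀ r, ∃ i, x₀ i = rep r := by
      intro r
      have := (Finset.mem_sdiff.1 (hrep_F r)).1
      simpa [eq_comm] using Finset.mem_image.1 this
    choose idx hidx using hrep_image
    set s : Fin K → ℕ := fun j => (Finset.univ.filter (fun r => a j < rep r)).card with hs
    have hsN : ∀ j, s j ≤ N := by
      intro j
      calc s j ≤ Finset.univ.card := Finset.card_filter_le _ _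
        _ = N := by rw [Finset.card_univ, Fintype.card_fin]
    have hs_mono : Monotone s := by
      intro j j' hjj'
      refine Finset.card_le_card (Finset.monotone_filter_right _ ?_)
      intro r _ hr
      exact lt_of_le_of_lt (ha_anti.antitone hjj') hr
    have hrep_gt : ∀ j r, a j < rep r ↔ (r : ℕ) < s j := fun j r =>
      rank_lemma rep hrep_anti (a j) r
    have hrep_ne : ∀ j r, rep r ≠ a j := fun j r h => hrep_notA r (h ▸ ha_mem j)
    have hrep_lt : ∀ j r, rep r < a j ↔ s j ≤ (r : ℕ) := by
      intro j r
      rw [← not_lt, ← hrep_gt j r]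
      constructor
      · intro h
        exact fun h' => absurd h (not_lt.2 (le_of_lt h'))
      · intro h
        exact lt_of_le_of_ne (not_lt.1 h) (hrep_ne j r)
    set f : (Fin n → Q) → Fin N → Q := fun x r => x (idx r) with hf
    -- order-type transfer facts
    have OT : ∀ x, ot x = ot x₀ → ∀ p q, (c x p ≤ c x q ↔ c x₀ p ≤ c x₀ q) :=
      fun x hx => (ot_iff x x₀).1 hx
    have OTlt : ∀ x, ot x = ot x₀ → ∀ p q, (c x p < c x q ↔ c x₀ p < c x₀ q) := by
      intro x hx p q
      rw [lt_iff_not_ge, lt_iff_not_ge, OT x hx q p]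
    have OTeq : ∀ x, ot x = ot x₀ → ∀ p q, (c x p = c x q ↔ c x₀ p = c x₀ q) := by
      intro x hx p q
      rw [le_antisymm_iff, le_antisymm_iff, OT x hx p q, OT x hx q p]
    have hcover : ∀ i, (∃ j, x₀ i = a j) ∨ (∃ r, x₀ i = rep r) := by
      intro i
      by_cases h : x₀ i ∈ hAfin.toFinset
      · obtain ⟨j, hj⟩ := ha_cover (x₀ i) (hAfin.mem_toFinset.1 h)
        exact Or.inl ⟨j, hj.symm⟩
      · have : x₀ i ∈ F := Finset.mem_sdiff.2 ⟨Finset.mem_image.2 ⟨i, Finset.mem_univ i, rfl⟩, h⟩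
        obtain ⟨r, hr⟩ := hrep_cover _ this
        exact Or.inr ⟨r, hr.symm⟩
    -- definability of the part
    have hbasic : ∀ p q : Fin n ⊕ Fin K, DLODefinable {x : Fin n → Q | c x p ≤ c x q} := by
      rintro (i | j) (i' | j')
      · exact dlod_le_le i i'
      · exact dlod_le_const i (a j')
      · exact dlod_const_le i' (a j)
      · by_cases h : a j ≤ a j'
        · have he : {x : Fin n → Q | c x (Sum.inr j) ≤ c x (Sum.inr j')} = Set.univ := by
            ext x; simpa [hc] using h
          rw [he]; exact dlod_univ
        · have he : {x : Fin n → Q | c x (Sum.inr j) ≤ c x (Sum.inr j')} = ∅ := by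
            ext x; simpa [hc] using h
          rw [he]; exact dlod_empty
    have hpartdef : DLODefinable {x | ot x = ot x₀} := by
      have hset : {x | ot x = ot x₀} = ⋂ pq : (Fin n ⊕ Fin K) × (Fin n ⊕ Fin K),
          (if c x₀ pq.1 ≤ c x₀ pq.2 then {x | c x pq.1 ≤ c x pq.2}
            else {x | c x pq.1 ≤ c x pq.2}ᶜ) := by
        ext x
        simp only [Set.mem_setOf_eq, Set.mem_iInter]
        rw [ot_iff]
        constructor
        · intro h pq
          by_cases hpq : c x₀ pq.1 ≤ c x₀ pq.2
          · rw [if_pos hpq]; exact (h pq.1 pq.2).2 hpq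
          · rw [if_neg hpq]; exact fun hx => hpq ((h pq.1 pq.2).1 hx)
        · intro h p q
          have hthis := h (p, q)
          by_cases hpq : c x₀ p ≤ c x₀ q
          · rw [if_pos hpq] at hthis; exact ⟨fun _ => hpq, fun _ => hthis⟩
          · rw [if_neg hpq] at hthis
            exact ⟨fun hx => absurd hx hthis, fun hx => absurd hx hpq⟩
      rw [hset]
      refine DLODefinable.iInter ?_
      intro pq
      by_cases hpq : c x₀ pq.1 ≤ c x₀ pq.2
      · rw [if_pos hpq]; exact hbasic pq.1 pq.2
      · rw [if_neg hpq]; exact (hbasic pq.1 pq.2).compl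
    refine ⟨hpartdef, N, K, a, s, hsN, ha_anti, hs_mono, f, ⟨?_, ?_, ?_⟩, ?_⟩
    · -- MapsTo
      intro x hx
      have hx' : ot x = ot x₀ := hx
      refine ⟨?_, ?_⟩
      · intro r r' hrr'
        have h0 : x₀ (idx r') < x₀ (idx r) := by
          rw [hidx r', hidx r]; exact hrep_anti hrr'
        exact (OTlt x hx' (Sum.inl (idx r')) (Sum.inl (idx r))).2 h0
      · intro j
        constructor
        · intro h
          have hlt : a j < x₀ (idx ⟨s j - 1, by have := hsN j; omega⟩) := by
            rw [hidx]; exact (hrep_gt j _).2 (show s j - 1 < s j by omega)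
          exact (OTlt x hx' (Sum.inr j) (Sum.inl (idx _))).2 hlt
        · intro h
          have hlt : x₀ (idx ⟨s j, h⟩) < a j := by
            rw [hidx]; exact (hrep_lt j _).2 (le_refl _)
          exact (OTlt x hx' (Sum.inl (idx _)) (Sum.inr j)).2 hlt
    · -- InjOn
      intro x hx x' hx' heq
      funext i
      rcases hcover i with ⟨j, hj⟩ | ⟨r, hr⟩
      · have h1 : x i = a j := (OTeq x hx (Sum.inl i) (Sum.inr j)).2 hj
        have h2 : x' i = a j := (OTeq x' hx' (Sum.inl i) (Sum.inr j)).2 hj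
        rw [h1, h2]
      · have h0 : x₀ i = x₀ (idx r) := by rw [hidx]; exact hr
        have h1 : x i = x (idx r) := (OTeq x hx (Sum.inl i) (Sum.inl (idx r))).2 h0
        have h2 : x' i = x' (idx r) := (OTeq x' hx' (Sum.inl i) (Sum.inl (idx r))).2 h0
        have h3 : x (idx r) = x' (idx r) := congrFun heq r
        rw [h1, h2, h3]
    · -- SurjOn
      intro y hy
      obtain ⟨hy_anti, hy_c⟩ := hy
      have hy_gt : ∀ j (r : Fin N), a j < y r ↔ (r : ℕ) < s j := by
        intro j r
        constructor
        · intro h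
          by_contra hcon
          push_neg at hcon
          have hjN : s j < N := lt_of_le_of_lt hcon r.isLt
          have h1 : y r ≤ y ⟨s j, hjN⟩ :=
            hy_anti.antitone (by simpa [Fin.le_def] using hcon)
          exact absurd (lt_of_le_of_lt h1 ((hy_c j).2 hjN)) (not_lt.2 (le_of_lt h))
        · intro h
          have h1 : 1 ≤ s j := by omega
          refine lt_of_lt_of_le ((hy_c j).1 h1) (hy_anti.antitone ?_)
          simp only [Fin.le_def]
          omega
      have hy_ne : ∀ j r, y r ≠ a j := by
        intro j r h
        rcases lt_or_ge (r : ℕ) (s j) with h1 | h1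
        · have := (hy_gt j r).2 h1
          rw [h] at this; exact lt_irrefl _ this
        · have hjN : s j < N := lt_of_le_of_lt h1 r.isLt
          have h2 : y r ≤ y ⟨s j, hjN⟩ := hy_anti.antitone (by simpa [Fin.le_def] using h1)
          have h3 := lt_of_le_of_lt h2 ((hy_c j).2 hjN)
          rw [h] at h3; exact lt_irrefl _ h3
      have hy_lt : ∀ j r, y r < a j ↔ s j ≤ (r : ℕ) := by
        intro j r
        rw [← not_lt, ← hy_gt j r]
        constructor
        · intro h h'
          exact absurd h (not_lt.2 (le_of_lt h'))
        · intro h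
          exact lt_of_le_of_ne (not_lt.1 h) (hy_ne j r)
      set x : Fin n → Q := fun i => if h : ∃ r, x₀ i = rep r then y h.choose else x₀ i
        with hxdef
      have hx_of_rep : ∀ i r, x₀ i = rep r → x i = y r := by
        intro i r hr
        have hex : ∃ r', x₀ i = rep r' := ⟨r, hr⟩
        have he : rep hex.choose = rep r := by rw [← hex.choose_spec, ← hr]
        have h1 : x i = y hex.choose := by simp only [hxdef]; rw [dif_pos hex]
        rw [h1, hrep_anti.injective he]
      have hclass : ∀ p, (∃ j, c x p = a j ∧ c x₀ p = a j) ∨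
          (∃ r, c x p = y r ∧ c x₀ p = rep r) := by
        rintro (i | j)
        · rcases hcover i with ⟨j, hj⟩ | ⟨r, hr⟩
          · left
            refine ⟨j, ?_, hj⟩
            have hnot : ¬∃ r, x₀ i = rep r := by
              rintro ⟨r, hr⟩
              exact hrep_ne j r (hr.symm.trans hj)
            show x i = a j
            simp only [hxdef]
            rw [dif_neg hnot]
            exact hj
          · right; exact ⟨r, hx_of_rep i r hr, hr⟩
        · left; exact ⟨j, rfl, rfl⟩
      have hmix : ∀ j r, (a j ≤ y r ↔ a j ≤ rep r) ∧ (y r ≤ a j ↔ rep r ≤ a j) := by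
        intro j r
        have h1 : ¬ (a j = y r) := fun h => hy_ne j r h.symm
        have h2 : ¬ (a j = rep r) := fun h => hrep_ne j r h.symm
        constructor
        · rw [le_iff_lt_or_eq, le_iff_lt_or_eq]
          simp [h1, h2, hy_gt j r, hrep_gt j r]
        · rw [le_iff_lt_or_eq, le_iff_lt_or_eq]
          simp [hy_ne j r, hrep_ne j r, hy_lt j r, hrep_lt j r]
      have hxpart : ot x = ot x₀ := by
        rw [ot_iff]
        intro p q
        rcases hclass p with ⟨j, hp1, hp2⟩ | ⟨r, hp1, hp2⟩ <;>
          rcases hclass q with ⟨j', hq1, hq2⟩ | ⟨r', hq1, hq2⟩ <;> rw [hp1, hp2, hq1, hq2]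
        · exact (hmix j r').1
        · exact (hmix j' r).2
        · exact hy_anti.le_iff_ge.trans hrep_anti.le_iff_ge.symm
      refine ⟨x, hxpart, ?_⟩
      funext r
      exact hx_of_rep (idx r) r (hidx r)
    · -- graph definable
      have hgraph_eq : graphOn {x | ot x = ot x₀} f =
          {z : Fin (n + N) → Q | (fun i => z (Fin.castAdd N i)) ∈ {x | ot x = ot x₀}} ∩
          ⋂ r : Fin N, {z : Fin (n + N) → Q |
            z (Fin.natAdd n r) = z (Fin.castAdd N (idx r))} := by
        ext z
        constructor
        · rintro ⟨x, hx, rfl⟩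
          refine ⟨?_, ?_⟩
          · have he : (fun i => Fin.append x (f x) (Fin.castAdd N i)) = x := by
              funext i; exact Fin.append_left x (f x) i
            rw [Set.mem_setOf_eq, he]
            exact hx
          · refine Set.mem_iInter.2 fun r => ?_
            show Fin.append x (f x) (Fin.natAdd n r) = Fin.append x (f x) (Fin.castAdd N (idx r))
            rw [Fin.append_right, Fin.append_left]
        · rintro ⟨h1, h2⟩
          rw [Set.mem_setOf_eq] at h1
          refine ⟨fun i => z (Fin.castAdd N i), h1, ?_⟩
          funext k
          refine Fin.addCases ?_ ?_ k
          · intro i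
            rw [Fin.append_left]
          · intro r
            rw [Fin.append_right]
            exact Set.mem_iInter.1 h2 r
      rw [hgraph_eq]
      exact (hpartdef.preimage_comp (Fin.castAdd N)).inter
        (DLODefinable.iInter fun r => dlod_eq (Fin.natAdd n r) (Fin.castAdd N (idx r)))
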